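/- arXiv:1308.2237 — 2 statements merged into one kernel-verified Lean document; each statement's English description precedes it below -/
import Mathlib

section
/- Let λ ∈ Z^n be weakly decreasing, J ⊆ {1,...,n} with λ - e_J weakly decreasing. Define δ_n(μ) := 1/Π_{l∈Z}[m_l(μ)]! and V_{μ,K} as the product of (1-q^{k-j+1})/(1-q^{k-j}) over pairs j < k with j ∈ K, k ∉ K, μ_j = μ_k. Then δ_n(λ - e_J) · V_{λ-e_J, J} = δ_n(λ) · V_{λ, J^c}. -/
noncomputable def qint (q : ℝ) (m : ℕ) : ℝ := (1 - q ^ m) / (1 - q)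

noncomputable def qfact (q : ℝ) (m : ℕ) : ℝ := ∏ i ∈ Finset.range m, qint q (i + 1)

def mult {n : ℕ} (lam : Fin n → ℤ) (l : ℤ) : ℕ :=
  (Finset.univ.filter fun j => lam j = l).card

/-- `δ_n(λ) = 1 / ∏_l [m_l(λ)]!`. -/
noncomputable def deltaW {n : ℕ} (q : ℝ) (lam : Fin n → ℤ) : ℝ :=
  (∏ l ∈ Finset.univ.image lam, qfact q (mult lam l))⁻¹

/-- `V_{μ,K}`: product over pairs `j < k` with `j ∈ K`, `k ∉ K`, `μ_j = μ_k`. -/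
noncomputable def Vcoef {n : ℕ} (q : ℝ) (lam : Fin n → ℤ) (K : Finset (Fin n)) : ℝ :=
  ∏ j : Fin n, ∏ k : Fin n,
    if j < k ∧ j ∈ K ∧ k ∉ K ∧ lam j = lam k then
      (1 - q ^ ((k : ℕ) - (j : ℕ) + 1)) / (1 - q ^ ((k : ℕ) - (j : ℕ))) else 1

noncomputable def Rq (q : ℝ) (d : ℕ) : ℝ := (1 - q ^ (d + 1)) / (1 - q ^ d)

lemma one_sub_qpow_pos {q : ℝ} (hq : 0 < q) (hq1 : q < 1) {d : ℕ} (hd : d ≠ 0) :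
    0 < 1 - q ^ d := by
  have := pow_lt_one₀ hq.le hq1 hd
  linarith

lemma Rq_ne_zero {q : ℝ} (hq : 0 < q) (hq1 : q < 1) {d : ℕ} (hd : d ≠ 0) : Rq q d ≠ 0 :=
  div_ne_zero (one_sub_qpow_pos hq hq1 (by omega)).ne' (one_sub_qpow_pos hq hq1 hd).ne'

lemma telescope {q : ℝ} (hq : 0 < q) (hq1 : q < 1) (c : ℕ) :
    ∏ d ∈ Finset.range c, Rq q (d + 1) = qint q (c + 1) := by
  have hq' : (1 : ℝ) - q ≠ 0 := by linarith
  induction c with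
  | zero => simp [qint, pow_one, div_self hq']
  | succ c ih =>
    rw [Finset.prod_range_succ, ih, qint, qint, Rq]
    have h1 : (1 : ℝ) - q ^ (c + 1) ≠ 0 := (one_sub_qpow_pos hq hq1 (by omega)).ne'
    field_simp

lemma prod_rank {α : Type*} [LinearOrder α] (f : ℕ → ℝ) (s : Finset α) :
    ∏ j ∈ s, f ((s.filter (fun i => i < j)).card) = ∏ i ∈ Finset.range s.card, f i := by
  classical
  induction s using Finset.induction_on_max with
  | empty => simp
  | insert a s ha ih =>
    have ha' : a ∉ s := fun h => lt_irrefl a (ha a h)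
    have h1 : (insert a s).filter (fun i => i < a) = s := by
      ext x
      simp only [Finset.mem_filter, Finset.mem_insert]
      constructor
      · rintro ⟨h | h, hx⟩
        · exact absurd hx (lt_irrefl x (h ▸ hx)).elim
        · exact h
      · exact fun h => ⟨Or.inr h, ha x h⟩
    have h2 : ∀ j ∈ s, (insert a s).filter (fun i => i < j) = s.filter (fun i => i < j) := by
      intro j hj
      ext x
      simp only [Finset.mem_filter, Finset.mem_insert]
      constructor
      · rintro ⟨h | h, hx⟩
        · exact absurd hx (by rw [h]; exact not_lt.mpr (ha j hj).le)
        · exact ⟨h, hx⟩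
      · exact fun ⟨h, hx⟩ => ⟨Or.inr h, hx⟩
    rw [Finset.prod_insert ha', Finset.card_insert_of_notMem ha', Finset.prod_range_succ, h1,
      Finset.prod_congr rfl (fun j hj => by rw [h2 j hj]), ih]
    ring

lemma prod_qfact_eq {n : ℕ} (q : ℝ) (lam : Fin n → ℤ) :
    ∏ l ∈ Finset.univ.image lam, qfact q (mult lam l)
      = ∏ j : Fin n, qint q ((Finset.univ.filter fun i => i < j ∧ lam i = lam j).card + 1) := by
  rw [← Finset.prod_fiberwise_of_maps_to (g := lam)
    (fun x _ => Finset.mem_image_of_mem lam (Finset.mem_univ x))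
    (fun j => qint q ((Finset.univ.filter fun i => i < j ∧ lam i = lam j).card + 1))]
  refine Finset.prod_congr rfl fun l _ => ?_
  have key : ∀ j ∈ Finset.univ.filter (fun j => lam j = l),
      (Finset.univ.filter fun i => i < j ∧ lam i = lam j)
        = (Finset.univ.filter (fun j => lam j = l)).filter (fun i => i < j) := by
    intro j hj
    simp only [Finset.mem_filter, Finset.mem_univ, true_and] at hj
    ext i
    simp only [Finset.mem_filter, Finset.mem_univ, true_and, hj]
    tauto
  rw [Finset.prod_congr rfl (fun j hj => by rw [key j hj]),
    prod_rank (fun c => qint q (c + 1))]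
  rfl

lemma pairProd_eq {n : ℕ} {q : ℝ} (hq : 0 < q) (hq1 : q < 1) (lam : Fin n → ℤ)
    (hlam : Antitone lam) :
    (∏ j : Fin n, ∏ k : Fin n,
        if j < k ∧ lam j = lam k then Rq q ((k : ℕ) - (j : ℕ)) else 1)
      = ∏ l ∈ Finset.univ.image lam, qfact q (mult lam l) := by
  rw [prod_qfact_eq, Finset.prod_comm]
  refine Finset.prod_congr rfl fun k _ => ?_
  rw [← Finset.prod_filter]
  set S := Finset.univ.filter (fun j : Fin n => j < k ∧ lam j = lam k) with hS
  have hmem : ∀ j ∈ S, (j : ℕ) < (k : ℕ) ∧ lam j = lam k := by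
    intro j hj
    simp only [hS, Finset.mem_filter, Finset.mem_univ, true_and] at hj
    exact ⟨hj.1, hj.2⟩
  have hsub : ∀ j ∈ S, ((k : ℕ) - (j : ℕ)) ≤ S.card := by
    intro j hj
    obtain ⟨hjk, heq⟩ := hmem j hj
    have hIco : Finset.Ico j k ⊆ S := by
      intro i hi
      rw [Finset.mem_Ico] at hi
      simp only [hS, Finset.mem_filter, Finset.mem_univ, true_and]
      refine ⟨hi.2, le_antisymm ?_ ?_⟩
      · rw [← heq]; exact hlam hi.1
      · exact hlam hi.2.le
    have := Finset.card_le_card hIco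
    rwa [Fin.card_Ico] at this
  have hinj : ∀ x ∈ S, ∀ y ∈ S, (k : ℕ) - (x : ℕ) - 1 = (k : ℕ) - (y : ℕ) - 1 → x = y := by
    intro x hx y hy hxy
    have h1 := (hmem x hx).1
    have h2 := (hmem y hy).1
    exact Fin.ext (by omega)
  have himg : S.image (fun j : Fin n => (k : ℕ) - (j : ℕ) - 1) = Finset.range S.card := by
    apply Finset.eq_of_subset_of_card_le
    · intro d hd
      simp only [Finset.mem_image] at hd
      obtain ⟨j, hj, rfl⟩ := hd
      have h1 := (hmem j hj).1
      have h2 := hsub j hj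
      rw [Finset.mem_range]
      omega
    · rw [Finset.card_range, Finset.card_image_of_injOn (fun x hx y hy => hinj x hx y hy)]
  have hP : ∏ d ∈ S.image (fun j : Fin n => (k : ℕ) - (j : ℕ) - 1), Rq q (d + 1)
      = ∏ j ∈ S, Rq q ((k : ℕ) - (j : ℕ) - 1 + 1) := Finset.prod_image hinj
  rw [himg, telescope hq hq1] at hP
  rw [hP]
  refine Finset.prod_congr rfl fun j hj => ?_
  have := (hmem j hj).1
  congr 1
  omega

lemma perpair {n : ℕ} {q : ℝ} (hq : 0 < q) (hq1 : q < 1) (lam : Fin n → ℤ)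
    (hlam : Antitone lam) (J : Finset (Fin n))
    (hJ : Antitone fun j => lam j - if j ∈ J then 1 else 0) (j k : Fin n) :
    (if j < k ∧ (lam j - if j ∈ J then 1 else 0) = (lam k - if k ∈ J then 1 else 0)
        then Rq q ((k : ℕ) - (j : ℕ)) else 1)⁻¹
      * (if j < k ∧ j ∈ J ∧ k ∉ J ∧
            (lam j - if j ∈ J then 1 else 0) = (lam k - if k ∈ J then 1 else 0)
          then Rq q ((k : ℕ) - (j : ℕ)) else 1)
    = (if j < k ∧ lam j = lam k then Rq q ((k : ℕ) - (j : ℕ)) else 1)⁻¹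
      * (if j < k ∧ j ∈ Jᶜ ∧ k ∉ Jᶜ ∧ lam j = lam k
          then Rq q ((k : ℕ) - (j : ℕ)) else 1) := by
  by_cases hjk : j < k
  · have hd : (k : ℕ) - (j : ℕ) ≠ 0 := by
      have : (j : ℕ) < (k : ℕ) := hjk
      omega
    have hR0 : Rq q ((k : ℕ) - (j : ℕ)) ≠ 0 := Rq_ne_zero hq hq1 hd
    have hjk' : j ≤ k := hjk.le
    by_cases haJ : j ∈ J <;> by_cases hbJ : k ∈ J
    · -- both in J
      simp only [haJ, hbJ, if_true, not_true_eq_false, and_false, false_and, if_false,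
        Finset.mem_compl, not_false_eq_true]
      have : lam j - 1 = lam k - 1 ↔ lam j = lam k := sub_left_inj
      by_cases he : lam j = lam k
      · simp [hjk, he, this.mpr he]
      · simp [hjk, he, fun h => he (this.mp h)]
    · -- j ∈ J, k ∉ J
      have hne : lam j ≠ lam k := by
        intro he
        have := hJ hjk'
        simp only [haJ, hbJ, if_true, if_false] at this
        omega
      simp only [haJ, hbJ, if_true, if_false, Finset.mem_compl, not_true_eq_false,
        not_false_eq_true, false_and, and_false, hne, hjk, true_and]
      by_cases he : lam j - 1 = lam k
      · simp [he, inv_mul_cancel₀ hR0]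
      · simp [he]
    · -- j ∉ J, k ∈ J
      have hne : lam j - 0 ≠ lam k - 1 := by
        have := hlam hjk'
        omega
      simp only [haJ, hbJ, if_true, if_false, Finset.mem_compl, not_true_eq_false,
        not_false_eq_true, false_and, and_false, hne, hjk, true_and]
      by_cases he : lam j = lam k
      · simp [he, inv_mul_cancel₀ hR0]
      · simp [he]
    · -- neither in J
      simp only [haJ, hbJ, if_false, Finset.mem_compl, not_false_eq_true, not_true_eq_false,
        false_and, and_false]
      have : lam j - 0 = lam k - 0 ↔ lam j = lam k := by constructor <;> intro h <;> omega
      by_cases he : lam j = lam k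
      · simp [hjk, he, this.mpr he]
      · simp [hjk, he, fun h => he (this.mp h)]
  · simp [hjk]

theorem delta_V_identity (q : ℝ) (hq : 0 < q) (hq1 : q < 1) (n : ℕ)
    (lam : Fin n → ℤ) (hlam : Antitone lam) (J : Finset (Fin n))
    (hJ : Antitone fun j => lam j - if j ∈ J then 1 else 0) :
    deltaW q (fun j => lam j - if j ∈ J then 1 else 0)
        * Vcoef q (fun j => lam j - if j ∈ J then 1 else 0) J
      = deltaW q lam * Vcoef q lam Jᶜ := by
  have hmuA : Antitone (fun j => lam j - if j ∈ J then 1 else 0) := hJ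
  have hL := pairProd_eq hq hq1 (fun j => lam j - if j ∈ J then 1 else 0) hmuA
  have hR := pairProd_eq hq hq1 lam hlam
  rw [deltaW, deltaW, ← hL, ← hR, Vcoef, Vcoef]
  simp only [← Finset.prod_inv_distrib, ← Finset.prod_mul_distrib]
  refine Finset.prod_congr rfl fun j _ => ?_
  refine Finset.prod_congr rfl fun k _ => ?_
  exact perpair hq hq1 lam hlam J hJ j k
end

section
/- Adjointness of the commuting Hamiltonians: for finitely supported f, g on Λ_n, ⟨H_r f, g⟩_n = ⟨f, H_r^* g⟩_n, where (H_r f)(λ) = Σ_{J: |J|=r, λ-e_J∈Λ_n} V_{λ,J^c} f(λ - e_J) and (H_r^* g)(λ) = Σ_{J: |J|=r, λ+e_J∈Λ_n} V_{λ,J} g(λ + e_J), and the inner product is ⟨f,g⟩_n = Σ_λ f(λ) conj(g(λ)) δ_n(λ) with δ_n(λ) = 1/Π_l[m_l(λ)]!. This follows from the identity δ_n(λ - e_J) V_{λ-e_J,J} = δ_n(λ) V_{λ,J^c} for λ, λ-e_J ∈ Λ_n. -/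
open scoped Classical

/-- `(H_r f)(λ) = Σ_{J : |J| = r, λ - e_J ∈ Λ_n} V_{λ,J^c} f(λ - e_J)`. -/
noncomputable def Hr {n : ℕ} (q : ℝ) (r : ℕ) (f : (Fin n → ℤ) → ℂ) : (Fin n → ℤ) → ℂ :=
  fun lam => ∑ J : Finset (Fin n),
    if J.card = r ∧ Antitone (fun k => lam k - if k ∈ J then 1 else 0) then
      ((Vcoef q lam Jᶜ : ℝ) : ℂ) * f (fun k => lam k - if k ∈ J then 1 else 0)
    else 0

/-- `(H_r^* g)(λ) = Σ_{J : |J| = r, λ + e_J ∈ Λ_n} V_{λ,J} g(λ + e_J)`. -/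
noncomputable def HrStar {n : ℕ} (q : ℝ) (r : ℕ) (g : (Fin n → ℤ) → ℂ) : (Fin n → ℤ) → ℂ :=
  fun lam => ∑ J : Finset (Fin n),
    if J.card = r ∧ Antitone (fun k => lam k + if k ∈ J then 1 else 0) then
      ((Vcoef q lam J : ℝ) : ℂ) * g (fun k => lam k + if k ∈ J then 1 else 0)
    else 0

/-- `⟨f,g⟩_n = Σ_{λ∈Λ_n} f(λ) conj(g(λ)) δ_n(λ)`. -/
noncomputable def ip {n : ℕ} (q : ℝ) (f g : (Fin n → ℤ) → ℂ) : ℂ :=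
  ∑ᶠ lam : Fin n → ℤ,
    if Antitone lam then f lam * (starRingEnd ℂ) (g lam) * ((deltaW q lam : ℝ) : ℂ) else 0

lemma one_sub_pow_pos {q : ℝ} (hq : 0 < q) (hq1 : q < 1) {m : ℕ} (hm : m ≠ 0) :
    0 < 1 - q ^ m := by
  have : q ^ m < 1 := pow_lt_one₀ hq.le hq1 hm
  linarith

lemma telescope_s19 {q : ℝ} (hq : 0 < q) (hq1 : q < 1) (t : ℕ) :
    ∏ i ∈ Finset.range t, (1 - q ^ (i + 2)) / (1 - q ^ (i + 1)) = (1 - q ^ (t + 1)) / (1 - q) := by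
  induction t with
  | zero => simp [div_self (by linarith : (1:ℝ) - q ≠ 0)]
  | succ t ih =>
    rw [Finset.prod_range_succ, ih]
    have h1 : (1:ℝ) - q ^ (t+1) ≠ 0 := (one_sub_pow_pos hq hq1 (by omega)).ne'
    have h2 : (1:ℝ) - q ≠ 0 := by linarith
    field_simp

lemma extraProd {q : ℝ} (hq : 0 < q) (hq1 : q < 1) (n t : ℕ) (ht : t ≤ n) :
    ∏ j ∈ Finset.Ico (n - t) n, (1 - q ^ (n - j + 1)) / (1 - q ^ (n - j))
      = (1 - q ^ (t + 1)) / (1 - q) := by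
  rw [Finset.prod_Ico_eq_prod_range, show n - (n - t) = t by omega]
  have : ∀ i ∈ Finset.range t,
      (1 - q ^ (n - (n - t + i) + 1)) / (1 - q ^ (n - (n - t + i)))
        = (1 - q ^ ((t - 1 - i) + 2)) / (1 - q ^ ((t - 1 - i) + 1)) := by
    intro i hi
    rw [Finset.mem_range] at hi
    rw [show n - (n - t + i) + 1 = (t - 1 - i) + 2 by omega,
        show n - (n - t + i) = (t - 1 - i) + 1 by omega]
  rw [Finset.prod_congr rfl this, Finset.prod_range_reflect
    (fun i => (1 - q ^ (i + 2)) / (1 - q ^ (i + 1))) t]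
  exact telescope_s19 hq hq1 t

lemma filter_eq_Ico (n : ℕ) (lam : ℕ → ℤ) (hA : ∀ j k, j ≤ k → k ≤ n → lam k ≤ lam j) :
    (Finset.range n).filter (fun j => lam j = lam n)
      = Finset.Ico (n - ((Finset.range n).filter (fun j => lam j = lam n)).card) n := by
  set S := (Finset.range n).filter (fun j => lam j = lam n) with hS
  have hmem : ∀ j, j ∈ S ↔ j < n ∧ lam j = lam n := by
    intro j; simp [hS, Finset.mem_filter, Finset.mem_range]
  rcases S.eq_empty_or_nonempty with h | h
  · rw [h]; simp
  · set a := S.min' h with ha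
    have haS : a ∈ S := S.min'_mem h
    have haln : a < n := ((hmem a).1 haS).1
    have hSa : S = Finset.Ico a n := by
      ext j
      rw [Finset.mem_Ico, hmem]
      constructor
      · intro hj
        exact ⟨S.min'_le j ((hmem j).2 hj), hj.1⟩
      · rintro ⟨haj, hjn⟩
        refine ⟨hjn, le_antisymm ?_ ?_⟩
        · have := hA a j haj hjn.le
          rw [((hmem a).1 haS).2] at this
          exact this
        · exact hA j n hjn.le le_rfl
    rw [hSa, Nat.card_Ico]
    congr 1
    omega

lemma deltaN {q : ℝ} (hq : 0 < q) (hq1 : q < 1) :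
    ∀ (n : ℕ) (lam : ℕ → ℤ), (∀ j k, j ≤ k → k < n → lam k ≤ lam j) →
    (∏ l ∈ (Finset.range n).image lam,
        qfact q (((Finset.range n).filter (fun j => lam j = l)).card))
      = ∏ j ∈ Finset.range n, ∏ k ∈ Finset.range n,
          if j < k ∧ lam j = lam k then (1 - q ^ (k - j + 1)) / (1 - q ^ (k - j)) else 1 := by
  intro n
  induction n with
  | zero => intro lam _; simp
  | succ n ih =>
    intro lam hA
    have hq' : (1:ℝ) - q ≠ 0 := by linarith
    set t := ((Finset.range n).filter (fun j => lam j = lam n)).card with htdef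
    have htn : t ≤ n := le_trans (Finset.card_filter_le _ _) (by simp)
    have hmult : ∀ l, ((Finset.range (n+1)).filter (fun j => lam j = l)).card
        = ((Finset.range n).filter (fun j => lam j = l)).card + (if lam n = l then 1 else 0) := by
      intro l
      rw [Finset.range_add_one, Finset.filter_insert]
      split_ifs with h
      · rw [Finset.card_insert_of_notMem (by simp)]
      · simp
    -- LHS
    have hL : (∏ l ∈ (Finset.range (n+1)).image lam,
        qfact q (((Finset.range (n+1)).filter (fun j => lam j = l)).card))
        = (∏ l ∈ (Finset.range n).image lam,
            qfact q (((Finset.range n).filter (fun j => lam j = l)).card))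
          * ((1 - q ^ (t + 1)) / (1 - q)) := by
      have himg : (Finset.range (n+1)).image lam = insert (lam n) ((Finset.range n).image lam) := by
        rw [Finset.range_add_one, Finset.image_insert]
      rw [himg]
      by_cases hmem : lam n ∈ (Finset.range n).image lam
      · rw [Finset.insert_eq_self.mpr hmem]
        rw [← Finset.prod_erase_mul _ _ hmem, ← Finset.prod_erase_mul _ _ hmem]
        have herase : ∀ l ∈ ((Finset.range n).image lam).erase (lam n),
            qfact q (((Finset.range (n+1)).filter (fun j => lam j = l)).card)
              = qfact q (((Finset.range n).filter (fun j => lam j = l)).card) := by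
          intro l hl
          have hln : lam n ≠ l := fun h => (Finset.ne_of_mem_erase hl) h.symm
          rw [hmult l, if_neg hln, add_zero]
        rw [Finset.prod_congr rfl herase, hmult (lam n), if_pos rfl, ← htdef]
        rw [qfact, Finset.prod_range_succ, ← qfact, qint]
        ring
      · rw [Finset.prod_insert hmem]
        have ht0 : t = 0 := by
          rw [htdef, Finset.card_eq_zero, Finset.filter_eq_empty_iff]
          intro j hj hlj
          exact hmem (Finset.mem_image.mpr ⟨j, hj, hlj⟩)
        have hcongr : ∀ l ∈ (Finset.range n).image lam,
            qfact q (((Finset.range (n+1)).filter (fun j => lam j = l)).card)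
              = qfact q (((Finset.range n).filter (fun j => lam j = l)).card) := by
          intro l hl
          have hln : lam n ≠ l := fun h => hmem (h ▸ hl)
          rw [hmult l, if_neg hln, add_zero]
        rw [Finset.prod_congr rfl hcongr, hmult (lam n), if_pos rfl, ht0]
        have hz : ((Finset.range n).filter (fun j => lam j = lam n)).card = 0 := ht0
        rw [hz]
        have h1 : qfact q 1 = 1 := by simp [qfact, qint, div_self hq']
        rw [h1, one_mul, pow_one, div_self hq', mul_one]
    rw [hL]
    -- RHS
    rw [Finset.prod_range_succ]
    have hlast : (∏ k ∈ Finset.range (n+1),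
        if n < k ∧ lam n = lam k then (1 - q ^ (k - n + 1)) / (1 - q ^ (k - n)) else 1) = 1 := by
      apply Finset.prod_eq_one
      intro k hk
      rw [Finset.mem_range] at hk
      exact if_neg (fun h => by omega)
    rw [hlast, mul_one]
    have hsplit : ∀ j ∈ Finset.range n, (∏ k ∈ Finset.range (n+1),
        if j < k ∧ lam j = lam k then (1 - q ^ (k - j + 1)) / (1 - q ^ (k - j)) else 1)
        = (∏ k ∈ Finset.range n,
            if j < k ∧ lam j = lam k then (1 - q ^ (k - j + 1)) / (1 - q ^ (k - j)) else 1)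
          * (if lam j = lam n then (1 - q ^ (n - j + 1)) / (1 - q ^ (n - j)) else 1) := by
      intro j hj
      rw [Finset.mem_range] at hj
      rw [Finset.prod_range_succ]
      congr 1
      exact if_congr ⟨fun h => h.2, fun h => ⟨hj, h⟩⟩ rfl rfl
    rw [Finset.prod_congr rfl hsplit, Finset.prod_mul_distrib,
      ← ih lam (fun j k hjk hk => hA j k hjk (by omega)),
      ← Finset.prod_filter (fun j => lam j = lam n)
        (fun j => (1 - q ^ (n - j + 1)) / (1 - q ^ (n - j)))]
    rw [filter_eq_Ico n lam (fun j k hjk hk => hA j k hjk (by omega)), ← htdef,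
      extraProd hq hq1 n t htn]

noncomputable def Qprod {n : ℕ} (q : ℝ) (lam : Fin n → ℤ) : ℝ :=
  ∏ j : Fin n, ∏ k : Fin n,
    if j < k ∧ lam j = lam k then
      (1 - q ^ ((k : ℕ) - (j : ℕ) + 1)) / (1 - q ^ ((k : ℕ) - (j : ℕ))) else 1


lemma deltaW_eq {n : ℕ} {q : ℝ} (hq : 0 < q) (hq1 : q < 1) (lam : Fin n → ℤ)
    (hA : Antitone lam) : deltaW q lam = (Qprod q lam)⁻¹ := by
  unfold deltaW Qprod
  congr 1
  set lamN : ℕ → ℤ := fun i => if h : i < n then lam ⟨i, h⟩ else 0 with hlamN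
  have hval : ∀ j : Fin n, lamN (j : ℕ) = lam j := by
    intro j; simp [hlamN, j.isLt]
  have hmono : ∀ j k, j ≤ k → k < n → lamN k ≤ lamN j := by
    intro j k hjk hk
    have hj : j < n := lt_of_le_of_lt hjk hk
    simpa [hlamN, hj, hk] using hA (show (⟨j, hj⟩ : Fin n) ≤ ⟨k, hk⟩ from hjk)
  have himg : Finset.univ.image lam = (Finset.range n).image lamN := by
    ext l
    simp only [Finset.mem_image, Finset.mem_univ, Finset.mem_range, true_and]
    constructor
    · rintro ⟨j, hj⟩; exact ⟨(j : ℕ), j.isLt, by rw [hval]; exact hj⟩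
    · rintro ⟨j, hj, hl⟩; exact ⟨⟨j, hj⟩, by rw [← hval ⟨j, hj⟩] at *; exact hl⟩
  have hmult : ∀ l, mult lam l = ((Finset.range n).filter (fun j => lamN j = l)).card := by
    intro l
    calc mult lam l = ∑ j : Fin n, (if lamN (j : ℕ) = l then 1 else 0) := by
          rw [mult, Finset.card_filter]
          exact Finset.sum_congr rfl fun j _ => by rw [← hval j]
      _ = ∑ j ∈ Finset.range n, (if lamN j = l then 1 else 0) :=
          Fin.sum_univ_eq_sum_range (fun i => if lamN i = l then 1 else 0) n
      _ = ((Finset.range n).filter (fun j => lamN j = l)).card :=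
          (Finset.card_filter _ _).symm
  rw [himg, Finset.prod_congr rfl (fun l _ => by rw [hmult l]), deltaN hq hq1 n lamN hmono]
  have hinner : ∀ j : Fin n, (∏ k : Fin n,
      if j < k ∧ lam j = lam k then
        (1 - q ^ ((k : ℕ) - (j : ℕ) + 1)) / (1 - q ^ ((k : ℕ) - (j : ℕ))) else 1)
      = ∏ k ∈ Finset.range n,
          if (j : ℕ) < k ∧ lamN (j : ℕ) = lamN k then
            (1 - q ^ (k - (j : ℕ) + 1)) / (1 - q ^ (k - (j : ℕ))) else 1 := by
    intro j
    calc (∏ k : Fin n, if j < k ∧ lam j = lam k then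
          (1 - q ^ ((k : ℕ) - (j : ℕ) + 1)) / (1 - q ^ ((k : ℕ) - (j : ℕ))) else 1)
        = ∏ k : Fin n, (if (j : ℕ) < (k : ℕ) ∧ lamN (j : ℕ) = lamN (k : ℕ) then
            (1 - q ^ ((k : ℕ) - (j : ℕ) + 1)) / (1 - q ^ ((k : ℕ) - (j : ℕ))) else 1) :=
          Finset.prod_congr rfl fun k _ =>
            if_congr (and_congr Fin.lt_def (by rw [hval, hval])) rfl rfl
      _ = _ := Fin.prod_univ_eq_prod_range (fun kn =>
            if (j : ℕ) < kn ∧ lamN (j : ℕ) = lamN kn then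
              (1 - q ^ (kn - (j : ℕ) + 1)) / (1 - q ^ (kn - (j : ℕ))) else 1) n
  refine Eq.symm ?_
  calc (∏ j : Fin n, ∏ k : Fin n, if j < k ∧ lam j = lam k then
        (1 - q ^ ((k : ℕ) - (j : ℕ) + 1)) / (1 - q ^ ((k : ℕ) - (j : ℕ))) else 1)
      = ∏ j : Fin n, ∏ k ∈ Finset.range n,
          if (j : ℕ) < k ∧ lamN (j : ℕ) = lamN k then
            (1 - q ^ (k - (j : ℕ) + 1)) / (1 - q ^ (k - (j : ℕ))) else 1 :=
        Finset.prod_congr rfl fun j _ => hinner j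
    _ = ∏ j ∈ Finset.range n, ∏ k ∈ Finset.range n,
          if j < k ∧ lamN j = lamN k then
            (1 - q ^ (k - j + 1)) / (1 - q ^ (k - j)) else 1 :=
        Fin.prod_univ_eq_prod_range (fun jn => ∏ k ∈ Finset.range n,
          if jn < k ∧ lamN jn = lamN k then
            (1 - q ^ (k - jn + 1)) / (1 - q ^ (k - jn)) else 1) n

lemma Qprod_pos {n : ℕ} {q : ℝ} (hq : 0 < q) (hq1 : q < 1) (lam : Fin n → ℤ) :
    0 < Qprod q lam := by
  apply Finset.prod_pos
  intro j _
  apply Finset.prod_pos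
  intro k _
  split_ifs with h
  · have hjk : (j : ℕ) < (k : ℕ) := h.1
    exact div_pos (one_sub_pow_pos hq hq1 (by omega)) (one_sub_pow_pos hq hq1 (by omega))
  · exact one_pos

lemma key {n : ℕ} {q : ℝ} (hq : 0 < q) (hq1 : q < 1) (lam mu : Fin n → ℤ)
    (J : Finset (Fin n)) (hdef : ∀ k, mu k = lam k - if k ∈ J then 1 else 0)
    (hlam : Antitone lam) (hmu : Antitone mu) :
    deltaW q lam * Vcoef q lam Jᶜ = deltaW q mu * Vcoef q mu J := by
  have hprod : Qprod q mu * Vcoef q lam Jᶜ = Qprod q lam * Vcoef q mu J := by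
    unfold Qprod Vcoef
    rw [← Finset.prod_mul_distrib, ← Finset.prod_mul_distrib]
    apply Finset.prod_congr rfl
    intro j _
    rw [← Finset.prod_mul_distrib, ← Finset.prod_mul_distrib]
    apply Finset.prod_congr rfl
    intro k _
    by_cases hjk : j < k
    · by_cases hj : j ∈ J <;> by_cases hk : k ∈ J
      · -- both in J
        rw [if_neg (fun h : j < k ∧ j ∈ Jᶜ ∧ k ∉ Jᶜ ∧ lam j = lam k =>
              (Finset.mem_compl.mp h.2.1) hj),
            if_neg (fun h : j < k ∧ j ∈ J ∧ k ∉ J ∧ mu j = mu k => h.2.2.1 hk),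
            mul_one, mul_one]
        refine if_congr (and_congr Iff.rfl ?_) rfl rfl
        rw [hdef j, hdef k, if_pos hj, if_pos hk]
        omega
      · -- j ∈ J, k ∉ J
        have hne : ¬ lam j = lam k := by
          have h1 := hmu hjk.le
          rw [hdef j, hdef k, if_pos hj, if_neg hk] at h1
          omega
        rw [if_neg (fun h : j < k ∧ j ∈ Jᶜ ∧ k ∉ Jᶜ ∧ lam j = lam k => hne h.2.2.2),
            if_neg (fun h : j < k ∧ lam j = lam k => hne h.2), mul_one, one_mul]
        exact if_congr ⟨fun h => ⟨h.1, hj, hk, h.2⟩, fun h => ⟨h.1, h.2.2.2⟩⟩ rfl rfl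
      · -- j ∉ J, k ∈ J
        have hne : ¬ mu j = mu k := by
          have h1 := hlam hjk.le
          rw [hdef j, hdef k, if_neg hj, if_pos hk]
          omega
        rw [if_neg (fun h : j < k ∧ mu j = mu k => hne h.2),
            if_neg (fun h : j < k ∧ j ∈ J ∧ k ∉ J ∧ mu j = mu k => hne h.2.2.2),
            one_mul, mul_one]
        exact if_congr ⟨fun h => ⟨h.1, h.2.2.2⟩,
          fun h => ⟨h.1, Finset.mem_compl.mpr hj,
            fun hc => (Finset.mem_compl.mp hc) hk, h.2⟩⟩ rfl rfl
      · -- neither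
        rw [if_neg (fun h : j < k ∧ j ∈ Jᶜ ∧ k ∉ Jᶜ ∧ lam j = lam k =>
              h.2.2.1 (Finset.mem_compl.mpr hk)),
            if_neg (fun h : j < k ∧ j ∈ J ∧ k ∉ J ∧ mu j = mu k => hj h.2.1),
            mul_one, mul_one]
        refine if_congr (and_congr Iff.rfl ?_) rfl rfl
        rw [hdef j, hdef k, if_neg hj, if_neg hk]
        omega
    · rw [if_neg (fun h : j < k ∧ mu j = mu k => hjk h.1),
          if_neg (fun h : j < k ∧ j ∈ Jᶜ ∧ k ∉ Jᶜ ∧ lam j = lam k => hjk h.1),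
          if_neg (fun h : j < k ∧ lam j = lam k => hjk h.1),
          if_neg (fun h : j < k ∧ j ∈ J ∧ k ∉ J ∧ mu j = mu k => hjk h.1)]
  rw [deltaW_eq hq hq1 lam hlam, deltaW_eq hq hq1 mu hmu]
  have h1 := (Qprod_pos hq hq1 lam).ne'
  have h2 := (Qprod_pos hq hq1 mu).ne'
  field_simp
  linarith [hprod]

noncomputable def Tfun {n : ℕ} (q : ℝ) (r : ℕ) (f g : (Fin n → ℤ) → ℂ)
    (J : Finset (Fin n)) (lam : Fin n → ℤ) : ℂ :=
  if Antitone lam ∧ J.card = r ∧ Antitone (fun k => lam k - if k ∈ J then 1 else 0) then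
    ((Vcoef q lam Jᶜ : ℝ) : ℂ) * f (fun k => lam k - if k ∈ J then 1 else 0)
      * (starRingEnd ℂ) (g lam) * ((deltaW q lam : ℝ) : ℂ)
  else 0

noncomputable def Sfun {n : ℕ} (q : ℝ) (r : ℕ) (f g : (Fin n → ℤ) → ℂ)
    (J : Finset (Fin n)) (mu : Fin n → ℤ) : ℂ :=
  if Antitone mu ∧ J.card = r ∧ Antitone (fun k => mu k + if k ∈ J then 1 else 0) then
    f mu * (((Vcoef q mu J : ℝ) : ℂ)
      * (starRingEnd ℂ) (g (fun k => mu k + if k ∈ J then 1 else 0)))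
      * ((deltaW q mu : ℝ) : ℂ)
  else 0

theorem Hr_HrStar_adjoint (q : ℝ) (hq : 0 < q) (hq1 : q < 1) (n r : ℕ)
    (hr : 1 ≤ r) (hrn : r ≤ n) (f g : (Fin n → ℤ) → ℂ)
    (hf : (Function.support f).Finite) (hg : (Function.support g).Finite) :
    ip q (Hr q r f) g = ip q f (HrStar q r g) := by
  classical
  have hL : ip q (Hr q r f) g = ∑ J : Finset (Fin n), ∑ᶠ lam, Tfun q r f g J lam := by
    unfold ip
    have h1 : ∀ lam : Fin n → ℤ,
        (if Antitone lam then
          Hr q r f lam * (starRingEnd ℂ) (g lam) * ((deltaW q lam : ℝ) : ℂ) else 0)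
        = ∑ J : Finset (Fin n), Tfun q r f g J lam := by
      intro lam
      by_cases hA : Antitone lam
      · rw [if_pos hA]
        unfold Hr
        rw [Finset.sum_mul, Finset.sum_mul]
        apply Finset.sum_congr rfl
        intro J _
        rw [ite_mul, ite_mul, zero_mul, zero_mul, Tfun]
        by_cases hc : J.card = r ∧ Antitone (fun k => lam k - if k ∈ J then 1 else 0)
        · rw [if_pos hc, if_pos ⟨hA, hc⟩]
        · rw [if_neg hc, if_neg (fun h => hc ⟨h.2.1, h.2.2⟩)]
      · rw [if_neg hA]
        symm
        apply Finset.sum_eq_zero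
        intro J _
        rw [Tfun, if_neg (fun h => hA h.1)]
    rw [finsum_congr h1]
    apply finsum_sum_comm
    intro J _
    apply Set.Finite.subset hg
    intro lam hlam
    simp only [Function.mem_support] at hlam ⊢
    intro h0
    apply hlam
    rw [Tfun]
    split_ifs
    · rw [h0, map_zero, mul_zero, zero_mul]
    · rfl
  have hR : ip q f (HrStar q r g) = ∑ J : Finset (Fin n), ∑ᶠ mu, Sfun q r f g J mu := by
    unfold ip
    have h1 : ∀ mu : Fin n → ℤ,
        (if Antitone mu then
          f mu * (starRingEnd ℂ) (HrStar q r g mu) * ((deltaW q mu : ℝ) : ℂ) else 0)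
        = ∑ J : Finset (Fin n), Sfun q r f g J mu := by
      intro mu
      by_cases hA : Antitone mu
      · rw [if_pos hA]
        unfold HrStar
        rw [map_sum, Finset.mul_sum, Finset.sum_mul]
        apply Finset.sum_congr rfl
        intro J _
        rw [apply_ite (starRingEnd ℂ), map_zero, map_mul, Complex.conj_ofReal,
          mul_ite, mul_zero, ite_mul, zero_mul, Sfun]
        by_cases hc : J.card = r ∧ Antitone (fun k => mu k + if k ∈ J then 1 else 0)
        · rw [if_pos hc, if_pos ⟨hA, hc⟩]
        · rw [if_neg hc, if_neg (fun h => hc ⟨h.2.1, h.2.2⟩)]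
      · rw [if_neg hA]
        symm
        apply Finset.sum_eq_zero
        intro J _
        rw [Sfun, if_neg (fun h => hA h.1)]
    rw [finsum_congr h1]
    apply finsum_sum_comm
    intro J _
    apply Set.Finite.subset hf
    intro mu hmu
    simp only [Function.mem_support] at hmu ⊢
    intro h0
    apply hmu
    rw [Sfun]
    split_ifs
    · rw [h0, zero_mul, zero_mul]
    · rfl
  rw [hL, hR]
  apply Finset.sum_congr rfl
  intro J _
  have hcomp := finsum_comp_equiv
    (Equiv.addRight (fun k => if k ∈ J then (1:ℤ) else 0) : (Fin n → ℤ) ≃ (Fin n → ℤ))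
    (f := Tfun q r f g J)
  rw [← hcomp]
  apply finsum_congr
  intro mu
  have happ : ((Equiv.addRight (fun k => if k ∈ J then (1:ℤ) else 0) :
      (Fin n → ℤ) ≃ (Fin n → ℤ)) mu) = (fun k => mu k + if k ∈ J then 1 else 0) := by
    funext k
    simp [Pi.add_apply]
  rw [happ, Tfun, Sfun]
  have hsub : (fun k => (mu k + if k ∈ J then (1:ℤ) else 0)
      - if k ∈ J then 1 else 0) = mu := by
    funext k
    ring
  simp only [hsub]
  by_cases hc : Antitone mu ∧ J.card = r ∧ Antitone (fun k => mu k + if k ∈ J then (1:ℤ) else 0)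
  · rw [if_pos ⟨hc.2.2, hc.2.1, hc.1⟩, if_pos hc]
    have hkey := key hq hq1 (fun k => mu k + if k ∈ J then (1:ℤ) else 0) mu J
      (fun k => by show mu k = (mu k + if k ∈ J then (1:ℤ) else 0) - if k ∈ J then 1 else 0; ring) hc.2.2 hc.1
    have hkeyC : ((deltaW q (fun k => mu k + if k ∈ J then (1:ℤ) else 0) : ℝ) : ℂ)
        * ((Vcoef q (fun k => mu k + if k ∈ J then (1:ℤ) else 0) Jᶜ : ℝ) : ℂ)
        = ((deltaW q mu : ℝ) : ℂ) * ((Vcoef q mu J : ℝ) : ℂ) := by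
      exact_mod_cast congrArg (fun x : ℝ => (x : ℂ)) hkey
    linear_combination (f mu * (starRingEnd ℂ)
      (g (fun k => mu k + if k ∈ J then (1:ℤ) else 0))) * hkeyC
  · rw [if_neg (fun h => hc ⟨h.2.2, h.2.1, h.1⟩), if_neg hc]
end
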